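/- Let N ≥ 1 and c : {0,…,N−1} → ℂ. Define the Chebyshev transform ĉ[j] = Σ_{ℓ=0}^{N−1} c[ℓ]·cos(π·ℓ·(2j+1)/(2N)) for 0 ≤ j ≤ N−1, let ω = exp(−2πi/(4N)), and define x : {0,…,4N−1} → ℂ by x[0] = 2c[0], x[ℓ] = c[ℓ] and x[4N−ℓ] = c[ℓ] for 1 ≤ ℓ ≤ N−1, and x[ℓ] = 0 otherwise. Then for every j with 0 ≤ j ≤ 2N−1: Σ_{ℓ=0}^{4N−1} x[ℓ]·ω^{ℓ(2j+1)} = 2·ĉ[min(j, 2N−1−j)]. In particular the odd-indexed DFT coefficients of the symmetric extension x recover the Chebyshev transform: x̂[2j+1] = x̂[4N−2j−1] = 2ĉ[j] for 0 ≤ j ≤ N−1. -/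
import Mathlib


/-- The odd-indexed DFT coefficients of the symmetric extension `x` of `c`
recover the Chebyshev (DCT) transform of `c`. -/
theorem stmt_15 (N : ℕ) (hN : 1 ≤ N) (c x : ℕ → ℂ)
    (hx0 : x 0 = 2 * c 0)
    (hx1 : ∀ ℓ, 1 ≤ ℓ → ℓ < N → x ℓ = c ℓ)
    (hx2 : ∀ ℓ, 1 ≤ ℓ → ℓ < N → x (4 * N - ℓ) = c ℓ)
    (hx3 : ∀ ℓ, N ≤ ℓ → ℓ ≤ 3 * N → x ℓ = 0)
    (j : ℕ) (hj : j < 2 * N) :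
    ∑ ℓ ∈ Finset.range (4 * N),
        x ℓ * Complex.exp (-(2 * (Real.pi : ℂ) * Complex.I) / (4 * (N : ℂ))) ^ (ℓ * (2 * j + 1)) =
      2 * ∑ ℓ ∈ Finset.range N,
        c ℓ * (Real.cos (Real.pi * (ℓ : ℝ) * (2 * ((min j (2 * N - 1 - j) : ℕ) : ℝ) + 1) /
          (2 * (N : ℝ))) : ℂ) := by
  have hNR : (N:ℝ) ≠ 0 := Nat.cast_ne_zero.mpr (by omega)
  have hNC : (N:ℂ) ≠ 0 := Nat.cast_ne_zero.mpr (by omega)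
  set ω : ℂ := Complex.exp (-(2 * (Real.pi : ℂ) * Complex.I) / (4 * (N : ℂ))) with hω
  set f : ℕ → ℂ := fun ℓ => x ℓ * ω ^ (ℓ * (2 * j + 1)) with hf
  -- cos angle reduction
  have hcos : ∀ ℓ : ℕ,
      Real.cos (Real.pi * (ℓ : ℝ) * (2 * ((min j (2 * N - 1 - j) : ℕ) : ℝ) + 1) / (2 * (N : ℝ)))
      = Real.cos (Real.pi * (ℓ : ℝ) * (2 * (j:ℝ) + 1) / (2 * (N : ℝ))) := by
    intro ℓ
    rcases le_or_gt j (2 * N - 1 - j) with h | h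
    · rw [min_eq_left h]
    · rw [min_eq_right h.le]
      have hc : ((2 * N - 1 - j : ℕ) : ℝ) = 2 * (N:ℝ) - 1 - (j:ℝ) := by
        have : j ≤ 2 * N - 1 := by omega
        push_cast [Nat.sub_sub, Nat.cast_sub (by omega : 1 + j ≤ 2 * N)]
        ring
      rw [hc]
      have harg : Real.pi * (ℓ : ℝ) * (2 * (2 * (N:ℝ) - 1 - (j:ℝ)) + 1) / (2 * (N : ℝ))
          = (ℓ:ℝ) * (2 * Real.pi) - Real.pi * (ℓ : ℝ) * (2 * (j:ℝ) + 1) / (2 * (N : ℝ)) := by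
        field_simp
        ring
      rw [harg, Real.cos_nat_mul_two_pi_sub]
  -- pairing identity
  have hωpow : ∀ k : ℕ, ω ^ k = Complex.exp ((k:ℂ) * (-(2 * (Real.pi : ℂ) * Complex.I) / (4 * (N : ℂ)))) :=
    fun k => (Complex.exp_nat_mul _ k).symm
  have hpair : ∀ ℓ : ℕ, ℓ ≤ 4 * N →
      ω ^ (ℓ * (2 * j + 1)) + ω ^ ((4 * N - ℓ) * (2 * j + 1))
      = 2 * (Real.cos (Real.pi * (ℓ : ℝ) * (2 * (j:ℝ) + 1) / (2 * (N : ℝ))) : ℂ) := by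
    intro ℓ hℓ
    rw [hωpow, hωpow]
    set α : ℝ := Real.pi * (ℓ : ℝ) * (2 * (j:ℝ) + 1) / (2 * (N : ℝ)) with hα
    have h1 : ((ℓ * (2 * j + 1) : ℕ) : ℂ) * (-(2 * (Real.pi : ℂ) * Complex.I) / (4 * (N : ℂ)))
        = -(α:ℂ) * Complex.I := by
      rw [hα]
      push_cast
      field_simp
      ring
    have h2 : (((4 * N - ℓ) * (2 * j + 1) : ℕ) : ℂ) * (-(2 * (Real.pi : ℂ) * Complex.I) / (4 * (N : ℂ)))
        = (α:ℂ) * Complex.I + ((-(2 * (j:ℤ) + 1) : ℤ) : ℂ) * (2 * (Real.pi : ℂ) * Complex.I) := by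
      rw [hα]
      push_cast [Nat.cast_sub hℓ]
      field_simp
      ring
    rw [h1, h2, Complex.exp_add, Complex.exp_int_mul_two_pi_mul_I, mul_one,
      Complex.ofReal_cos, Complex.cos]
    ring
  -- split sums
  have key : ∀ ℓ ∈ Finset.Ico 1 N, f ℓ + f (4 * N - ℓ)
      = 2 * (c ℓ * (Real.cos (Real.pi * (ℓ : ℝ) * (2 * ((min j (2 * N - 1 - j) : ℕ) : ℝ) + 1) / (2 * (N : ℝ))) : ℂ)) := by
    intro ℓ hℓ
    simp only [Finset.mem_Ico] at hℓ
    simp only [hf]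
    rw [hx1 ℓ hℓ.1 hℓ.2, hx2 ℓ hℓ.1 hℓ.2, hcos ℓ, ← mul_add, hpair ℓ (by omega)]
    ring
  have s1 : ∑ ℓ ∈ Finset.Ico 0 N, f ℓ + ∑ ℓ ∈ Finset.Ico N (3 * N + 1), f ℓ
      = ∑ ℓ ∈ Finset.Ico 0 (3 * N + 1), f ℓ := Finset.sum_Ico_consecutive f (by omega) (by omega)
  have s2 : ∑ ℓ ∈ Finset.Ico 0 (3 * N + 1), f ℓ + ∑ ℓ ∈ Finset.Ico (3 * N + 1) (4 * N), f ℓ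
      = ∑ ℓ ∈ Finset.Ico 0 (4 * N), f ℓ := Finset.sum_Ico_consecutive f (by omega) (by omega)
  have hmid : ∑ ℓ ∈ Finset.Ico N (3 * N + 1), f ℓ = 0 := by
    apply Finset.sum_eq_zero
    intro ℓ hℓ
    simp only [Finset.mem_Ico] at hℓ
    simp only [hf, hx3 ℓ hℓ.1 (by omega), zero_mul]
  have hrefl : ∑ ℓ ∈ Finset.Ico (3 * N + 1) (4 * N), f ℓ = ∑ ℓ ∈ Finset.Ico 1 N, f (4 * N - ℓ) := by
    apply Finset.sum_nbij' (fun ℓ => 4 * N - ℓ) (fun ℓ => 4 * N - ℓ)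
    · intro a ha; simp only [Finset.mem_Ico] at *; omega
    · intro a ha; simp only [Finset.mem_Ico] at *; omega
    · intro a ha; simp only [Finset.mem_Ico] at ha; omega
    · intro a ha; simp only [Finset.mem_Ico] at ha; omega
    · intro a ha; simp only [Finset.mem_Ico] at ha
      congr 1
      omega
  have hsplit0 : ∑ ℓ ∈ Finset.Ico 0 N, f ℓ = f 0 + ∑ ℓ ∈ Finset.Ico 1 N, f ℓ := by
    rw [← Finset.sum_Ico_consecutive f (by omega : 0 ≤ 1) (by omega : 1 ≤ N)]
    congr 1
    simp
  have hrange : Finset.range (4 * N) = Finset.Ico 0 (4 * N) := by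
    rw [Finset.range_eq_Ico]
  calc ∑ ℓ ∈ Finset.range (4 * N), f ℓ
      = ∑ ℓ ∈ Finset.Ico 0 (4 * N), f ℓ := by rw [hrange]
    _ = f 0 + (∑ ℓ ∈ Finset.Ico 1 N, f ℓ + ∑ ℓ ∈ Finset.Ico 1 N, f (4 * N - ℓ)) := by
        rw [← s2, ← s1, hmid, hrefl, hsplit0]; ring
    _ = f 0 + ∑ ℓ ∈ Finset.Ico 1 N, (f ℓ + f (4 * N - ℓ)) := by rw [Finset.sum_add_distrib]
    _ = f 0 + ∑ ℓ ∈ Finset.Ico 1 N,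
          2 * (c ℓ * (Real.cos (Real.pi * (ℓ : ℝ) * (2 * ((min j (2 * N - 1 - j) : ℕ) : ℝ) + 1) / (2 * (N : ℝ))) : ℂ)) := by
        rw [Finset.sum_congr rfl key]
    _ = 2 * ∑ ℓ ∈ Finset.range N,
          c ℓ * (Real.cos (Real.pi * (ℓ : ℝ) * (2 * ((min j (2 * N - 1 - j) : ℕ) : ℝ) + 1) / (2 * (N : ℝ))) : ℂ) := by
        rw [Finset.range_eq_Ico, ← Finset.sum_Ico_consecutive _ (by omega : 0 ≤ 1) (by omega : 1 ≤ N),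
          ← Finset.mul_sum, mul_add]
        congr 1
        have : Finset.Ico 0 1 = {0} := by simp
        rw [this]
        simp [hf, hx0]
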